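/- Let p and q be nonincreasing probability vectors (on Fin a and Fin b respectively, with first entries p(1) and q(1)). If p(1) ≤ q(1), then for every probability vector p' on any finite index set, (Σ_i √( q↓(i) · (p⊗p')↓(i) ))² ≤ ( √(p(1)·q(1)) + √((1 − p(1))·(1 − q(1))) )². -/

import Mathlib

/-- A probability vector on `Fin c`. -/
def IsProbVec {c : ℕ} (p : Fin c → ℝ) : Prop := (∀ i, 0 ≤ p i) ∧ ∑ i, p i = 1

/-- `w : ℕ → ℝ` is the nonincreasing rearrangement of the finite vector `v`,
padded with zeros. -/
def IsSortedPadOf {ι : Type} [Fintype ι] (v : ι → ℝ) (w : ℕ → ℝ) : Prop :=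
  Antitone w ∧ (∀ k, Fintype.card ι ≤ k → w k = 0) ∧
    ∃ e : Fin (Fintype.card ι) ≃ ι, ∀ k : Fin (Fintype.card ι), w (k : ℕ) = v (e k)

lemma pad_nonneg {ι : Type} [Fintype ι] {v : ι → ℝ} {w : ℕ → ℝ}
    (h : IsSortedPadOf v w) (k : ℕ) : 0 ≤ w k := by
  obtain ⟨hw, hz, -⟩ := h
  have h0 : w (k + Fintype.card ι) = 0 := hz _ (by omega)
  have := hw (Nat.le_add_right k (Fintype.card ι))
  linarith

lemma pad_sum {ι : Type} [Fintype ι] {v : ι → ℝ} {w : ℕ → ℝ}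
    (h : IsSortedPadOf v w) {N : ℕ} (hN : Fintype.card ι ≤ N) :
    ∑ i ∈ Finset.range N, w i = ∑ x, v x := by
  obtain ⟨hw, hz, e, he⟩ := h
  rw [← Finset.sum_range_add_sum_Ico _ hN]
  have h1 : ∑ i ∈ Finset.Ico (Fintype.card ι) N, w i = 0 :=
    Finset.sum_eq_zero fun i hi => hz i (Finset.mem_Ico.1 hi).1
  have h2 : ∑ i ∈ Finset.range (Fintype.card ι), w i = ∑ x, v x := by
    rw [← Fin.sum_univ_eq_sum_range]
    rw [Finset.sum_congr rfl fun k _ => he k]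
    exact Equiv.sum_comp e v
  rw [h1, h2, add_zero]

lemma pad_zero_eq_max {ι : Type} [Fintype ι] {v : ι → ℝ} {w : ℕ → ℝ}
    (h : IsSortedPadOf v w) (hcard : 0 < Fintype.card ι) (m : ι)
    (hm : ∀ x, v x ≤ v m) : w 0 = v m := by
  obtain ⟨hw, hz, e, he⟩ := h
  have h1 : w 0 = v (e ⟨0, hcard⟩) := he ⟨0, hcard⟩
  have h2 : v m = w ((e.symm m : Fin (Fintype.card ι)) : ℕ) := by
    rw [he (e.symm m), Equiv.apply_symm_apply]
  refine le_antisymm (h1.trans_le (hm _)) ?_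
  rw [h2]
  exact hw (Nat.zero_le _)

lemma key_scalar (q1 p1 t : ℝ) (h0t : 0 ≤ t) (htp : t ≤ p1) (hpq : p1 ≤ q1) (hq1 : q1 ≤ 1) :
    Real.sqrt (q1 * t) + Real.sqrt ((1 - q1) * (1 - t)) ≤
      Real.sqrt (q1 * p1) + Real.sqrt ((1 - q1) * (1 - p1)) := by
  have h0p : 0 ≤ p1 := le_trans h0t htp
  have h0q : 0 ≤ q1 := le_trans h0p hpq
  have hp1 : p1 ≤ 1 := le_trans hpq hq1
  have ht1 : t ≤ 1 := le_trans htp hp1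
  set A := Real.sqrt q1 with hA
  set B := Real.sqrt (1 - q1) with hB
  set C := Real.sqrt p1 with hC
  set D := Real.sqrt (1 - p1) with hD
  set E := Real.sqrt t with hE
  set F := Real.sqrt (1 - t) with hF
  have hA0 : 0 ≤ A := Real.sqrt_nonneg _
  have hB0 : 0 ≤ B := Real.sqrt_nonneg _
  have hC0 : 0 ≤ C := Real.sqrt_nonneg _
  have hD0 : 0 ≤ D := Real.sqrt_nonneg _
  have hE0 : 0 ≤ E := Real.sqrt_nonneg _
  have hF0 : 0 ≤ F := Real.sqrt_nonneg _
  have hAq : A * A = q1 := Real.mul_self_sqrt h0q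
  have hBq : B * B = 1 - q1 := Real.mul_self_sqrt (by linarith)
  have hCq : C * C = p1 := Real.mul_self_sqrt h0p
  have hDq : D * D = 1 - p1 := Real.mul_self_sqrt (by linarith)
  have hEq : E * E = t := Real.mul_self_sqrt h0t
  have hFq : F * F = 1 - t := Real.mul_self_sqrt (by linarith)
  have hEC : E ≤ C := Real.sqrt_le_sqrt htp
  have hAF : B * E ≤ A * F := by
    rw [hB, hE, hA, hF, ← Real.sqrt_mul (by linarith), ← Real.sqrt_mul h0q]
    exact Real.sqrt_le_sqrt (by nlinarith)
  have hAD : B * C ≤ A * D := by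
    rw [hB, hC, hA, hD, ← Real.sqrt_mul (by linarith), ← Real.sqrt_mul h0q]
    exact Real.sqrt_le_sqrt (by nlinarith)
  have key2 : B * (F - D) ≤ A * (C - E) := by
    have hsum : B * (C + E) ≤ A * (F + D) := by linarith [hAF, hAD]
    have heq : B * (F - D) * (F + D) = B * (C - E) * (C + E) :=
      by linear_combination B * hFq - B * hDq - B * hCq + B * hEq
    rcases eq_or_lt_of_le (add_nonneg hF0 hD0) with h | h
    · have hF' : F = 0 := by linarith
      have hD' : D = 0 := by linarith
      rw [hF', hD']
      have := mul_nonneg hA0 (sub_nonneg.2 hEC)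
      nlinarith
    · have h1 : B * (F - D) * (F + D) ≤ A * (C - E) * (F + D) := by
        rw [heq]
        have h2 := mul_le_mul_of_nonneg_right hsum (sub_nonneg.2 hEC)
        linarith [h2]
      exact le_of_mul_le_mul_right h1 h
  have e1 : Real.sqrt (q1 * t) = A * E := by
    rw [hA, hE, ← Real.sqrt_mul h0q]
  have e2 : Real.sqrt ((1 - q1) * (1 - t)) = B * F := by
    rw [hB, hF, ← Real.sqrt_mul (by linarith)]
  have e3 : Real.sqrt (q1 * p1) = A * C := by
    rw [hA, hC, ← Real.sqrt_mul h0q]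
  have e4 : Real.sqrt ((1 - q1) * (1 - p1)) = B * D := by
    rw [hB, hD, ← Real.sqrt_mul (by linarith)]
  rw [e1, e2, e3, e4]
  linarith [key2]

/-- if `p`, `q` are nonincreasing probability vectors with largest
entries `p(1) ≤ q(1)`, then for every ancilla distribution `p'` the
zero-communication conversion fidelity is at most
`(√(p(1)q(1)) + √((1-p(1))(1-q(1))))²`. -/
theorem stmt_10 (a b : ℕ) (ha : 1 ≤ a) (hb : 1 ≤ b)
    (p : Fin a → ℝ) (q : Fin b → ℝ) (hp : IsProbVec p) (hq : IsProbVec q)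
    (hpa : Antitone p) (hqa : Antitone q)
    (hpq : p ⟨0, ha⟩ ≤ q ⟨0, hb⟩) :
    ∀ (c : ℕ) (p' : Fin c → ℝ), IsProbVec p' →
      ∀ u v : ℕ → ℝ,
        IsSortedPadOf (fun x : Fin a × Fin c => p x.1 * p' x.2) u →
        IsSortedPadOf q v →
        (∑ i ∈ Finset.range (a * c + b), Real.sqrt (v i * u i)) ^ 2 ≤
          (Real.sqrt (p ⟨0, ha⟩ * q ⟨0, hb⟩) +
            Real.sqrt ((1 - p ⟨0, ha⟩) * (1 - q ⟨0, hb⟩))) ^ 2 := by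
  intro c p' hp' u v hu hv
  set p1 := p ⟨0, ha⟩ with hp1def
  set q1 := q ⟨0, hb⟩ with hq1def
  set N := a * c + b with hNdef
  have hc : 0 < c := by
    rcases Nat.eq_zero_or_pos c with h | h
    · exfalso
      have := hp'.2
      subst h
      simp at this
    · exact h
  have hcard_u : Fintype.card (Fin a × Fin c) = a * c := by simp
  have hcard_v : Fintype.card (Fin b) = b := by simp
  have hun : ∀ k, 0 ≤ u k := pad_nonneg hu
  have hvn : ∀ k, 0 ≤ v k := pad_nonneg hv
  -- sums are 1
  have hsu : ∑ i ∈ Finset.range N, u i = 1 := by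
    rw [pad_sum hu (by rw [hcard_u]; omega)]
    rw [Fintype.sum_prod_type]
    simp_rw [← Finset.mul_sum]
    rw [hp'.2]
    simp [hp.2]
  have hsv : ∑ i ∈ Finset.range N, v i = 1 := by
    rw [pad_sum hv (by rw [hcard_v]; omega), hq.2]
  -- top entries
  have hv0 : v 0 = q1 := by
    refine pad_zero_eq_max hv (by rw [hcard_v]; omega) ⟨0, hb⟩ ?_
    intro x
    exact hqa (by simp [Fin.le_def])
  have hq1le : q1 ≤ 1 := by
    rw [← hq.2]
    exact Finset.single_le_sum (fun i _ => hq.1 i) (Finset.mem_univ _)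
  have hp'le : ∀ j, p' j ≤ 1 := by
    intro j
    rw [← hp'.2]
    exact Finset.single_le_sum (fun i _ => hp'.1 i) (Finset.mem_univ _)
  have hu0p : u 0 ≤ p1 := by
    obtain ⟨hwu, hzu, e, he⟩ := hu
    have hpos : 0 < Fintype.card (Fin a × Fin c) := by rw [hcard_u]; positivity
    have h1 : u 0 = p (e ⟨0, hpos⟩).1 * p' (e ⟨0, hpos⟩).2 := he ⟨0, hpos⟩
    rw [h1]
    calc p (e ⟨0, hpos⟩).1 * p' (e ⟨0, hpos⟩).2
        ≤ p1 * 1 := by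
          exact mul_le_mul (hpa (by simp [Fin.le_def])) (hp'le _) (hp'.1 _) (hp.1 _)
      _ = p1 := mul_one _
  have hu00 : 0 ≤ u 0 := hun 0
  have hNpos : 0 < N := by omega
  -- split the sum at the first term
  have split : ∀ f : ℕ → ℝ,
      ∑ i ∈ Finset.range N, f i = f 0 + ∑ i ∈ Finset.Ico 1 N, f i := by
    intro f
    rw [Finset.range_eq_Ico, Finset.sum_eq_sum_Ico_succ_bot hNpos]
  set T := ∑ i ∈ Finset.Ico 1 N, Real.sqrt (v i * u i) with hT
  have hTnn : 0 ≤ T := Finset.sum_nonneg fun i _ => Real.sqrt_nonneg _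
  have hIv : ∑ i ∈ Finset.Ico 1 N, v i = 1 - v 0 := by
    have := split v
    linarith [hsv]
  have hIu : ∑ i ∈ Finset.Ico 1 N, u i = 1 - u 0 := by
    have := split u
    linarith [hsu]
  have hT2 : T ^ 2 ≤ (1 - v 0) * (1 - u 0) := by
    rw [← hIv, ← hIu]
    exact Finset.sum_sq_le_sum_mul_sum_of_sq_eq_mul _ (fun i _ => hvn i) (fun i _ => hun i)
      (fun i _ => Real.sq_sqrt (mul_nonneg (hvn i) (hun i)))
  have hTle : T ≤ Real.sqrt ((1 - v 0) * (1 - u 0)) := by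
    rw [Real.le_sqrt hTnn (mul_nonneg (by rw [hv0]; linarith) (by linarith [hu0p, hpq, hq1le]))]
    exact hT2
  have hS : ∑ i ∈ Finset.range N, Real.sqrt (v i * u i) ≤
      Real.sqrt (q1 * u 0) + Real.sqrt ((1 - q1) * (1 - u 0)) := by
    rw [split (fun i => Real.sqrt (v i * u i))]
    have : Real.sqrt (v 0 * u 0) = Real.sqrt (q1 * u 0) := by rw [hv0]
    rw [this]
    have : Real.sqrt ((1 - v 0) * (1 - u 0)) = Real.sqrt ((1 - q1) * (1 - u 0)) := by rw [hv0]
    linarith [hTle, this ▸ hTle]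
  have hkey : Real.sqrt (q1 * u 0) + Real.sqrt ((1 - q1) * (1 - u 0)) ≤
      Real.sqrt (q1 * p1) + Real.sqrt ((1 - q1) * (1 - p1)) :=
    key_scalar q1 p1 (u 0) hu00 hu0p hpq hq1le
  have hfinal : ∑ i ∈ Finset.range N, Real.sqrt (v i * u i) ≤
      Real.sqrt (p1 * q1) + Real.sqrt ((1 - p1) * (1 - q1)) := by
    rw [mul_comm p1 q1, mul_comm (1 - p1) (1 - q1)]
    linarith [hS, hkey]
  have hSnn : 0 ≤ ∑ i ∈ Finset.range N, Real.sqrt (v i * u i) :=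
    Finset.sum_nonneg fun i _ => Real.sqrt_nonneg _
  exact pow_le_pow_left₀ hSnn hfinal 2
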